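/- In the setting of Theorem 1, if additionally the average loss among groups with label y satisfies L_avg(f; y) ≤ ε, then with probability at least 1 − δ the worst-group loss among groups with label y satisfies L_wg(f; y) ≤ ε + B·C₁·L̂_align(f; y) + max_{g∈G_y} C₂√(8 log(|G_y|/δ)/n_g). -/

import Mathlib

open MeasureTheory ProbabilityTheory

lemma aux_exp_quad {t : ℝ} (ht : t ≤ 1) : Real.exp t ≤ 1 + t + t ^ 2 := by
  rcases le_or_gt t 0 with h | h
  · have this : 1 - t ≤ Real.exp (-t) := by
      have := Real.add_one_le_exp (-t); linarith
    have hp := Real.exp_pos t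
    have he : Real.exp t * Real.exp (-t) = 1 := by rw [← Real.exp_add]; simp
    have h3 : Real.exp t * (1 - t) ≤ 1 := by
      calc Real.exp t * (1 - t) ≤ Real.exp t * Real.exp (-t) := by
            exact mul_le_mul_of_nonneg_left this hp.le
        _ = 1 := he
    have ht3 : t ^ 3 ≤ 0 := Odd.pow_nonpos (by decide) h
    nlinarith [h3, ht3, sq_nonneg t]
  · have hb := Real.exp_bound' h.le ht (n := 3) (by norm_num)
    norm_num [Finset.sum_range_succ, Nat.factorial] at hb
    nlinarith [sq_nonneg t, pow_nonneg h.le 3, sq_nonneg (t-1)]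

lemma aux_int {α : Type*} [MeasurableSpace α] (μ : Measure α) [IsProbabilityMeasure μ]
    {f : α → ℝ} {c : ℝ} (hm : Measurable f) (hb : ∀ x, |f x| ≤ c) :
    Integrable f μ := by
  refine Integrable.mono' (integrable_const c) hm.aestronglyMeasurable ?_
  exact Filter.Eventually.of_forall hb

lemma aux_var {α : Type*} [MeasurableSpace α] (μ : Measure α) [IsProbabilityMeasure μ]
    {f : α → ℝ} {c : ℝ} (hc : 0 ≤ c) (hm : Measurable f) (hb : ∀ x, f x ∈ Set.Icc 0 c) :
    ∫ x, (f x - ∫ x, f x ∂μ) ^ 2 ∂μ ≤ c ^ 2 / 4 := by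
  have habs : ∀ x, |f x| ≤ c := fun x => abs_le.2 ⟨le_trans (by linarith) (hb x).1, (hb x).2⟩
  have hfint : Integrable f μ := aux_int μ hm habs
  have hf2int : Integrable (fun x => f x ^ 2) μ := by
    refine aux_int (c := c ^ 2) μ (hm.pow_const 2) (fun x => ?_)
    rw [abs_of_nonneg (sq_nonneg _), ← sq_abs]
    exact pow_le_pow_left₀ (abs_nonneg _) (habs x) 2
  set M := ∫ x, f x ∂μ with hM
  have hexpand : ∀ x, (f x - M) ^ 2 = f x ^ 2 + ((-(2 * M)) * f x + M ^ 2) := by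
    intro x; ring
  have hint2 : Integrable (fun x => (-(2 * M)) * f x + M ^ 2) μ :=
    (hfint.const_mul _).add (integrable_const _)
  have e1 : ∫ x, (f x - M) ^ 2 ∂μ = (∫ x, f x ^ 2 ∂μ) + ∫ x, ((-(2 * M)) * f x + M ^ 2) ∂μ := by
    simp_rw [hexpand]
    exact integral_add hf2int hint2
  have e2 : ∫ x, ((-(2 * M)) * f x + M ^ 2) ∂μ = (-(2 * M)) * M + M ^ 2 := by
    rw [integral_add (hfint.const_mul _) (integrable_const _), integral_const_mul,
      integral_const]
    simp [hM]
  have hf2le : ∫ x, f x ^ 2 ∂μ ≤ c * M := by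
    have : ∀ x, f x ^ 2 ≤ c * f x := by
      intro x
      have h1 := (hb x).1; have h2 := (hb x).2
      nlinarith
    calc ∫ x, f x ^ 2 ∂μ ≤ ∫ x, c * f x ∂μ := integral_mono hf2int (hfint.const_mul _) this
      _ = c * M := by rw [integral_const_mul]
  have hMb : 0 ≤ M := integral_nonneg (fun x => (hb x).1)
  rw [e1, e2]
  nlinarith [sq_nonneg (c - 2 * M)]

lemma aux_mgf {Ω : Type*} [MeasurableSpace Ω] (μ : Measure Ω) [IsProbabilityMeasure μ]
    {Y : Ω → ℝ} {c t : ℝ} (hm : Measurable Y) (hb : ∀ ω, |Y ω| ≤ c)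
    (hmean : ∫ ω, Y ω ∂μ = 0) (hvar : ∫ ω, (Y ω) ^ 2 ∂μ ≤ c ^ 2 / 4)
    (ht : 0 ≤ t) (htc : t * c ≤ 1) : mgf Y μ t ≤ Real.exp (t ^ 2 * c ^ 2 / 4) := by
  have hYint : Integrable Y μ := aux_int μ hm hb
  have hY2int : Integrable (fun ω => (Y ω) ^ 2) μ := by
    refine aux_int (c := c ^ 2) μ (hm.pow_const 2) (fun ω => ?_)
    rw [abs_of_nonneg (sq_nonneg _), ← sq_abs]
    exact pow_le_pow_left₀ (abs_nonneg _) (hb ω) 2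
  have hexp : ∀ ω, Real.exp (t * Y ω) ≤ 1 + t * Y ω + (t * Y ω) ^ 2 := by
    intro ω
    refine aux_exp_quad ?_
    calc t * Y ω ≤ t * c := by
          refine mul_le_mul_of_nonneg_left ?_ ht
          exact le_trans (le_abs_self _) (hb ω)
      _ ≤ 1 := htc
  have hint1 : Integrable (fun ω => Real.exp (t * Y ω)) μ := by
    refine aux_int (c := Real.exp (t * c)) μ ((hm.const_mul t).exp) (fun ω => ?_)
    rw [abs_of_pos (Real.exp_pos _)]
    refine Real.exp_le_exp.2 (mul_le_mul_of_nonneg_left ?_ ht)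
    exact le_trans (le_abs_self _) (hb ω)
  have hint2 : Integrable (fun ω => 1 + t * Y ω + (t * Y ω) ^ 2) μ := by
    refine (Integrable.add (integrable_const 1) (hYint.const_mul t)).add ?_
    have : (fun ω => (t * Y ω) ^ 2) = fun ω => t ^ 2 * (Y ω) ^ 2 := by
      funext ω; ring
    rw [this]; exact hY2int.const_mul _
  have h1 : mgf Y μ t ≤ ∫ ω, (1 + t * Y ω + (t * Y ω) ^ 2) ∂μ :=
    integral_mono hint1 hint2 hexp
  have h2 : ∫ ω, (1 + t * Y ω + (t * Y ω) ^ 2) ∂μ = 1 + t ^ 2 * ∫ ω, (Y ω) ^ 2 ∂μ := by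
    have heq : ∀ ω, 1 + t * Y ω + (t * Y ω) ^ 2 = (1 + t * Y ω) + t ^ 2 * Y ω ^ 2 := by
      intro ω; ring
    simp_rw [heq]
    have hA : Integrable (fun ω => 1 + t * Y ω) μ := (integrable_const 1).add (hYint.const_mul t)
    have e1 : ∫ ω, ((1 + t * Y ω) + t ^ 2 * Y ω ^ 2) ∂μ
        = (∫ ω, (1 + t * Y ω) ∂μ) + ∫ ω, t ^ 2 * Y ω ^ 2 ∂μ :=
      integral_add hA (hY2int.const_mul _)
    have e2 : ∫ ω, (1 + t * Y ω) ∂μ = 1 + t * ∫ ω, Y ω ∂μ := by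
      rw [integral_add (integrable_const 1) (hYint.const_mul t), integral_const,
        integral_const_mul]
      simp
    rw [e1, e2, integral_const_mul, hmean]
    ring
  have h3 : 1 + t ^ 2 * ∫ ω, (Y ω) ^ 2 ∂μ ≤ 1 + t ^ 2 * c ^ 2 / 4 := by
    have := mul_le_mul_of_nonneg_left hvar (sq_nonneg t)
    linarith
  have h4 : 1 + t ^ 2 * c ^ 2 / 4 ≤ Real.exp (t ^ 2 * c ^ 2 / 4) := by
    have := Real.add_one_le_exp (t ^ 2 * c ^ 2 / 4); linarith
  calc mgf Y μ t ≤ _ := h1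
    _ = _ := h2
    _ ≤ _ := h3
    _ ≤ _ := h4

lemma aux_tail {Ω ι : Type*} [MeasurableSpace Ω] {μ : Measure Ω} [IsProbabilityMeasure μ]
    {X : ι → Ω → ℝ} {c t : ℝ}
    (hindep : iIndepFun X μ)
    (hmeas : ∀ i, Measurable (X i))
    (hb : ∀ i ω, |X i ω| ≤ c)
    (hmean : ∀ i, ∫ ω, X i ω ∂μ = 0)
    (hvar : ∀ i, ∫ ω, (X i ω) ^ 2 ∂μ ≤ c ^ 2 / 4)
    (ht : 0 ≤ t) (htc : t * c ≤ 1) (F : Finset ι) (a : ℝ) :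
    (μ {ω | a ≤ ∑ i ∈ F, X i ω}).toReal
      ≤ Real.exp (-t * a + F.card * (t ^ 2 * c ^ 2 / 4)) := by
  classical
  have hsum_meas : Measurable (fun ω => ∑ i ∈ F, X i ω) :=
    Finset.measurable_sum F (fun i _ => hmeas i)
  have hsapp : (∑ i ∈ F, X i) = fun ω => ∑ i ∈ F, X i ω := by
    funext ω; simp [Finset.sum_apply]
  have hNe : Nonempty Ω := by
    by_contra h
    rw [not_nonempty_iff] at h
    have h1 : μ Set.univ = 1 := measure_univ
    rw [Set.univ_eq_empty_iff.2 h] at h1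
    simp at h1
  have hbub : ∀ ω, |∑ i ∈ F, X i ω| ≤ F.card * c := by
    intro ω
    calc |∑ i ∈ F, X i ω| ≤ ∑ i ∈ F, |X i ω| := Finset.abs_sum_le_sum_abs _ _
      _ ≤ ∑ _i ∈ F, c := Finset.sum_le_sum (fun i _ => hb i ω)
      _ = F.card * c := by rw [Finset.sum_const, nsmul_eq_mul]
  have hint : Integrable (fun ω => Real.exp (t * (∑ i ∈ F, X i) ω)) μ := by
    rw [hsapp]
    refine aux_int (c := Real.exp (t * (F.card * c))) μ ((hsum_meas.const_mul t).exp)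
      (fun ω => ?_)
    rw [abs_of_pos (Real.exp_pos _)]
    refine Real.exp_le_exp.2 (mul_le_mul_of_nonneg_left ?_ ht)
    exact le_trans (le_abs_self _) (hbub ω)
  have hchern := measure_ge_le_exp_mul_mgf (X := ∑ i ∈ F, X i) (μ := μ) a ht hint
  have hset : {ω | a ≤ ∑ i ∈ F, X i ω} = {ω | a ≤ (∑ i ∈ F, X i) ω} := by
    rw [hsapp]
  rw [hset]
  refine hchern.trans ?_
  have hprod : mgf (∑ i ∈ F, X i) μ t = ∏ i ∈ F, mgf (X i) μ t := hindep.mgf_sum hmeas F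
  have hprodle : ∏ i ∈ F, mgf (X i) μ t ≤ Real.exp (F.card * (t ^ 2 * c ^ 2 / 4)) := by
    calc ∏ i ∈ F, mgf (X i) μ t ≤ ∏ _i ∈ F, Real.exp (t ^ 2 * c ^ 2 / 4) :=
          Finset.prod_le_prod (fun i _ => mgf_nonneg)
            (fun i _ => aux_mgf μ (hmeas i) (hb i) (hmean i) (hvar i) ht htc)
      _ = Real.exp (F.card * (t ^ 2 * c ^ 2 / 4)) := by
          rw [Finset.prod_const, ← Real.exp_nat_mul]
  rw [Real.exp_add]
  exact mul_le_mul_of_nonneg_left (hprod ▸ hprodle) (Real.exp_pos _).le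

set_option maxHeartbeats 2000000 in
theorem stmt18 {X : Type*} [MeasurableSpace X] {Ω : Type*} [MeasureSpace Ω]
    [IsProbabilityMeasure (ℙ : Measure Ω)]
    {d d' : ℕ} {Y : Type*} (ℓ : EuclideanSpace ℝ (Fin d') → Y → ℝ) (y : Y)
    (C₁ C₂ B ε δ : ℝ) (hC₁ : 0 ≤ C₁) (hC₂ : 0 < C₂) (hε : 0 ≤ ε)
    (hδ : δ ∈ Set.Ioo (0 : ℝ) 1)
    (W : EuclideanSpace ℝ (Fin d) →L[ℝ] EuclideanSpace ℝ (Fin d')) (hW : ‖W‖ ≤ B)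
    (hLip : ∀ z z' y', |ℓ z y' - ℓ z' y'| ≤ C₁ * ‖z - z'‖)
    (hbdd : ∀ z y', ℓ z y' ∈ Set.Icc 0 C₂)
    (f_enc : X → EuclideanSpace ℝ (Fin d)) (hf : Measurable f_enc)
    (m : ℕ) (hm : 2 ≤ m) (n : Fin m → ℕ) (hn : ∀ i, 0 < n i)
    (q : Fin m → ℝ) (hq : ∀ i, 0 < q i) (hqsum : ∑ i, q i = 1)
    (P : Fin m → Measure X) (hP : ∀ i, IsProbabilityMeasure (P i))
    (S : ∀ i : Fin m, Fin (n i) → Ω → X) (hSmeas : ∀ i k, Measurable (S i k))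
    (hlaw : ∀ i k, Measure.map (S i k) ℙ = P i)
    (hindep : iIndepFun
      (fun pr : Σ i : Fin m, Fin (n i) => S pr.1 pr.2) ℙ)
    (havg : ∑ i, q i * ∫ x, ℓ (W (f_enc x)) y ∂(P i) ≤ ε) :
    ENNReal.ofReal (1 - δ) ≤ ℙ {ω |
      Finset.univ.sup' ⟨⟨0, by omega⟩, Finset.mem_univ _⟩
          (fun i : Fin m => ∫ x, ℓ (W (f_enc x)) y ∂(P i)) ≤
        ε + B * C₁ *
          ((Finset.univ : Finset (Fin m)).offDiag.sup'
            ⟨(⟨0, by omega⟩, ⟨1, by omega⟩), Finset.mem_offDiag.mpr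
              ⟨Finset.mem_univ _, Finset.mem_univ _, Fin.ne_of_val_ne Nat.zero_ne_one⟩⟩
            (fun pr =>
              (1 / ((n pr.1 : ℝ) * n pr.2)) *
                ∑ k, ∑ l, ‖f_enc (S pr.1 k ω) - f_enc (S pr.2 l ω)‖)) +
        Finset.univ.sup' ⟨⟨0, by omega⟩, Finset.mem_univ _⟩
          (fun g : Fin m => C₂ * Real.sqrt (8 * Real.log (m / δ) / n g))} := by
  classical
  obtain ⟨hδ0, hδ1⟩ := hδ
  have hB : 0 ≤ B := le_trans (norm_nonneg W) hW
  set φ : X → ℝ := fun x => ℓ (W (f_enc x)) y with hφdef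
  have hφcont : Continuous fun z : EuclideanSpace ℝ (Fin d') => ℓ z y := by
    refine (LipschitzWith.of_dist_le_mul (K := C₁.toNNReal) (f := fun z => ℓ z y) ?_).continuous
    intro z z'
    rw [Real.dist_eq, dist_eq_norm, Real.coe_toNNReal C₁ hC₁]
    exact hLip z z' y
  have hφm : Measurable φ := hφcont.measurable.comp (W.continuous.measurable.comp hf)
  have hφ0 : ∀ x, 0 ≤ φ x := fun x => (hbdd _ y).1
  have hφC : ∀ x, φ x ≤ C₂ := fun x => (hbdd _ y).2
  have hφabs : ∀ x, |φ x| ≤ C₂ := fun x => abs_le.2 ⟨by linarith [hφ0 x], hφC x⟩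
  set L : Fin m → ℝ := fun i => ∫ x, φ x ∂(P i) with hLdef
  have hint : ∀ i, Integrable φ (P i) := fun i => aux_int (P i) hφm hφabs
  have hL0 : ∀ i, 0 ≤ L i := fun i => integral_nonneg hφ0
  have hLC : ∀ i, L i ≤ C₂ := by
    intro i
    calc L i ≤ ∫ _x, C₂ ∂(P i) := integral_mono (hint i) (integrable_const _) hφC
      _ = C₂ := by simp
  set r : Fin m → ℝ := fun g => Real.sqrt (8 * Real.log (m / δ) / n g) with hrdef
  have hr0 : ∀ g, 0 ≤ r g := fun g => Real.sqrt_nonneg _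
  have hlog : 0 < Real.log (m / δ) := by
    refine Real.log_pos ?_
    rw [lt_div_iff₀ hδ0]
    have h1m : (1:ℝ) ≤ m := by exact_mod_cast Nat.one_le_of_lt hm
    nlinarith
  have hr2 : ∀ g, r g ^ 2 = 8 * Real.log (m / δ) / n g := by
    intro g
    refine Real.sq_sqrt ?_
    have := hn g
    positivity
  by_cases hbig : ∃ g, 1 ≤ r g
  · -- trivial case: the bound is larger than C₂, so the event is everything
    obtain ⟨g0, hg0⟩ := hbig
    refine le_trans (le_of_le_of_eq (ENNReal.ofReal_le_one.2 (by linarith))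
      measure_univ.symm) (measure_mono fun ω _ => ?_)
    simp only [Set.mem_setOf_eq]
    have hA0 : ∀ ω' : Ω, 0 ≤ B * C₁ *
        ((Finset.univ : Finset (Fin m)).offDiag.sup'
          ⟨(⟨0, by omega⟩, ⟨1, by omega⟩), Finset.mem_offDiag.mpr
            ⟨Finset.mem_univ _, Finset.mem_univ _, Fin.ne_of_val_ne Nat.zero_ne_one⟩⟩
          (fun pr =>
            (1 / ((n pr.1 : ℝ) * n pr.2)) *
              ∑ k, ∑ l, ‖f_enc (S pr.1 k ω') - f_enc (S pr.2 l ω')‖)) := by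
      intro ω'
      refine mul_nonneg (mul_nonneg hB hC₁) ?_
      have hmem : ((⟨0, by omega⟩ : Fin m), (⟨1, by omega⟩ : Fin m))
          ∈ (Finset.univ : Finset (Fin m)).offDiag :=
        Finset.mem_offDiag.mpr ⟨Finset.mem_univ _, Finset.mem_univ _, by
          simp [Fin.ext_iff]⟩
      refine le_trans ?_ (Finset.le_sup' _ hmem)
      positivity
    refine Finset.sup'_le _ _ (fun g _ => ?_)
    have h1 : L g ≤ C₂ := hLC g
    have h2 : C₂ ≤ C₂ * Real.sqrt (8 * Real.log (m / δ) / n g0) := by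
      have := hg0; simp only [hrdef] at this; nlinarith
    have h3 : C₂ * Real.sqrt (8 * Real.log (m / δ) / n g0)
        ≤ Finset.univ.sup' ⟨⟨0, by omega⟩, Finset.mem_univ _⟩
          (fun g : Fin m => C₂ * Real.sqrt (8 * Real.log (m / δ) / n g)) :=
      Finset.le_sup' (fun g : Fin m => C₂ * Real.sqrt (8 * Real.log (m / δ) / n g))
        (Finset.mem_univ g0)
    have := hA0 ω
    linarith
  · -- main case
    push_neg at hbig
    -- centered variables
    have havgL : ∑ i, q i * L i ≤ ε := havg
    set Z : (Σ i : Fin m, Fin (n i)) → Ω → ℝ :=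
      fun p ω => φ (S p.1 p.2 ω) - L p.1 with hZdef
    set N : (Σ i : Fin m, Fin (n i)) → Ω → ℝ :=
      fun p ω => L p.1 - φ (S p.1 p.2 ω) with hNdef
    have hZmeas : ∀ p, Measurable (Z p) :=
      fun p => (hφm.comp (hSmeas p.1 p.2)).sub measurable_const
    have hNmeas : ∀ p, Measurable (N p) :=
      fun p => measurable_const.sub (hφm.comp (hSmeas p.1 p.2))
    have hZindep : iIndepFun Z ℙ := by
      have := hindep.comp (fun p x => φ x - L p.1)
        (fun p => hφm.sub measurable_const)
      exact this
    have hNindep : iIndepFun N ℙ := by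
      have := hindep.comp (fun p x => L p.1 - φ x)
        (fun p => measurable_const.sub hφm)
      exact this
    have hmap : ∀ (p : Σ i : Fin m, Fin (n i)) (h : X → ℝ), Measurable h →
        ∫ ω, h (S p.1 p.2 ω) ∂ℙ = ∫ x, h x ∂(P p.1) := by
      intro p h hh
      rw [← hlaw p.1 p.2, integral_map (hSmeas p.1 p.2).aemeasurable
        hh.aestronglyMeasurable]
    have hintS : ∀ p : Σ i : Fin m, Fin (n i),
        Integrable (fun ω => φ (S p.1 p.2 ω)) ℙ :=
      fun p => aux_int ℙ (hφm.comp (hSmeas p.1 p.2)) (fun ω => hφabs _)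
    have hZmean : ∀ p, ∫ ω, Z p ω ∂ℙ = 0 := by
      intro p
      simp only [hZdef]
      rw [integral_sub (hintS p) (integrable_const _), integral_const, hmap p φ hφm]
      simp [hLdef]
    have hNmean : ∀ p, ∫ ω, N p ω ∂ℙ = 0 := by
      intro p
      simp only [hNdef]
      rw [integral_sub (integrable_const _) (hintS p), integral_const, hmap p φ hφm]
      simp [hLdef]
    have hZb : ∀ p ω, |Z p ω| ≤ C₂ := by
      intro p ω
      have h1 := hφ0 (S p.1 p.2 ω); have h2 := hφC (S p.1 p.2 ω)
      have h3 := hL0 p.1; have h4 := hLC p.1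
      simp only [hZdef]
      rw [abs_le]; constructor <;> simp <;> linarith
    have hNb : ∀ p ω, |N p ω| ≤ C₂ := by
      intro p ω
      have := hZb p ω
      simp only [hNdef]; simp only [hZdef] at this
      rwa [abs_sub_comm]
    have hZvar : ∀ p, ∫ ω, (Z p ω) ^ 2 ∂ℙ ≤ C₂ ^ 2 / 4 := by
      intro p
      have h := aux_var (f := fun ω => φ (S p.1 p.2 ω)) ℙ hC₂.le
        (hφm.comp (hSmeas p.1 p.2)) (fun ω => ⟨hφ0 _, hφC _⟩)
      rw [hmap p φ hφm] at h
      exact h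
    have hNvar : ∀ p, ∫ ω, (N p ω) ^ 2 ∂ℙ ≤ C₂ ^ 2 / 4 := by
      intro p
      have hNZ : ∀ ω, (N p ω) ^ 2 = (Z p ω) ^ 2 := fun ω => by
        simp only [hNdef, hZdef]; ring
      simp only [hNZ]
      exact hZvar p
    -- group index sets
    set F : Fin m → Finset (Σ i : Fin m, Fin (n i)) :=
      fun g => Finset.univ.map ⟨Sigma.mk g, sigma_mk_injective⟩ with hFdef
    have hFcard : ∀ g, (F g).card = n g := by
      intro g; simp [hFdef]
    have hFsum : ∀ (g : Fin m) (h : (Σ i : Fin m, Fin (n i)) → Ω → ℝ) (ω : Ω),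
        ∑ p ∈ F g, h p ω = ∑ k, h ⟨g, k⟩ ω := by
      intro g h ω; simp [hFdef, Finset.sum_map]
    set a : Fin m → ℝ := fun g => n g * (C₂ * r g / 2) with hadef
    -- tail bounds
    have htail : ∀ (g : Fin m) (V : (Σ i : Fin m, Fin (n i)) → Ω → ℝ),
        iIndepFun V ℙ → (∀ p, Measurable (V p)) →
        (∀ p ω, |V p ω| ≤ C₂) → (∀ p, ∫ ω, V p ω ∂ℙ = 0) →
        (∀ p, ∫ ω, (V p ω) ^ 2 ∂ℙ ≤ C₂ ^ 2 / 4) →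
        ℙ {ω | a g ≤ ∑ p ∈ F g, V p ω} ≤ ENNReal.ofReal ((δ / m) ^ 2) := by
      intro g V hVi hVm hVb hVmean hVvar
      have hnpos : (0:ℝ) < n g := by exact_mod_cast hn g
      have ht0 : 0 ≤ r g / C₂ := div_nonneg (hr0 g) hC₂.le
      have htc : r g / C₂ * C₂ ≤ 1 := by
        rw [div_mul_cancel₀ _ hC₂.ne']
        exact (hbig g).le
      have hT := aux_tail hVi hVm hVb hVmean hVvar ht0 htc (F g) (a g)
      rw [hFcard g] at hT
      have hexpeq : -(r g / C₂) * a g + (n g : ℝ) * ((r g / C₂) ^ 2 * C₂ ^ 2 / 4)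
          = -(2 * Real.log (m / δ)) := by
        have hrn : (n g : ℝ) * r g ^ 2 = 8 * Real.log (m / δ) := by
          rw [hr2 g]; field_simp
        simp only [hadef]
        field_simp
        nlinarith [hrn]
      have hexpval : Real.exp (-(2 * Real.log (m / δ))) = (δ / m) ^ 2 := by
        have hmδ : (0:ℝ) < m / δ := by
          have : (0:ℝ) < m := by positivity
          positivity
        rw [show -(2 * Real.log (m / δ)) = -Real.log (m / δ) + -Real.log (m / δ) by ring,
          Real.exp_add, Real.exp_neg, Real.exp_log hmδ, inv_div]
        ring
      rw [hexpeq, hexpval] at hT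
      rw [← ENNReal.ofReal_toReal (measure_ne_top ℙ _)]
      exact ENNReal.ofReal_le_ofReal hT
    -- the bad event
    set Bad : Set Ω := ⋃ g : Fin m,
      ({ω | a g ≤ ∑ p ∈ F g, Z p ω} ∪ {ω | a g ≤ ∑ p ∈ F g, N p ω}) with hBaddef
    have hBadmeas : MeasurableSet Bad := by
      refine MeasurableSet.iUnion (fun g => MeasurableSet.union ?_ ?_) <;>
        exact measurableSet_le measurable_const
          (Finset.measurable_sum _ (fun p _ => by
            first
            | exact hZmeas p
            | exact hNmeas p))
    have hBadle : ℙ Bad ≤ ENNReal.ofReal δ := by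
      calc ℙ Bad ≤ ∑ g : Fin m, ℙ ({ω | a g ≤ ∑ p ∈ F g, Z p ω}
            ∪ {ω | a g ≤ ∑ p ∈ F g, N p ω}) := measure_iUnion_fintype_le _ _
        _ ≤ ∑ _g : Fin m, (ENNReal.ofReal ((δ / m) ^ 2) + ENNReal.ofReal ((δ / m) ^ 2)) := by
            refine Finset.sum_le_sum (fun g _ => ?_)
            refine le_trans (measure_union_le _ _) (add_le_add ?_ ?_ : _ ≤ ENNReal.ofReal ((δ / m) ^ 2) + ENNReal.ofReal ((δ / m) ^ 2))
            · exact htail g Z hZindep hZmeas hZb hZmean hZvar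
            · exact htail g N hNindep hNmeas hNb hNmean hNvar
        _ ≤ ENNReal.ofReal δ := by
            rw [Finset.sum_const, Finset.card_univ, Fintype.card_fin, nsmul_eq_mul,
              ← ENNReal.ofReal_add (by positivity) (by positivity),
              ← ENNReal.ofReal_natCast m,
              ← ENNReal.ofReal_mul (by positivity)]
            refine ENNReal.ofReal_le_ofReal ?_
            have hm2 : (2:ℝ) ≤ m := by exact_mod_cast hm
            have hm0 : (0:ℝ) < m := by linarith
            rw [div_pow]
            rw [show (m:ℝ) * (δ ^ 2 / m ^ 2 + δ ^ 2 / m ^ 2) = 2 * δ ^ 2 / m by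
              field_simp; ring]
            rw [div_le_iff₀ hm0]
            nlinarith
    -- good ⊆ event
    have hgood : Badᶜ ⊆ {ω |
      Finset.univ.sup' ⟨⟨0, by omega⟩, Finset.mem_univ _⟩
          (fun i : Fin m => ∫ x, ℓ (W (f_enc x)) y ∂(P i)) ≤
        ε + B * C₁ *
          ((Finset.univ : Finset (Fin m)).offDiag.sup'
            ⟨(⟨0, by omega⟩, ⟨1, by omega⟩), Finset.mem_offDiag.mpr
              ⟨Finset.mem_univ _, Finset.mem_univ _, Fin.ne_of_val_ne Nat.zero_ne_one⟩⟩
            (fun pr =>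
              (1 / ((n pr.1 : ℝ) * n pr.2)) *
                ∑ k, ∑ l, ‖f_enc (S pr.1 k ω) - f_enc (S pr.2 l ω)‖)) +
        Finset.univ.sup' ⟨⟨0, by omega⟩, Finset.mem_univ _⟩
          (fun g : Fin m => C₂ * Real.sqrt (8 * Real.log (m / δ) / n g))} := by
      intro ω hω
      simp only [hBaddef, Set.mem_compl_iff, Set.mem_iUnion, Set.mem_union,
        Set.mem_setOf_eq, not_exists, not_or, not_le] at hω
      simp only [Set.mem_setOf_eq]
      set T : Fin m → ℝ := fun g => ∑ k, φ (S g k ω) with hTdef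
      have hsumZ : ∀ g, ∑ p ∈ F g, Z p ω = T g - n g * L g := by
        intro g
        rw [hFsum g Z ω]
        simp only [hZdef, hTdef]
        rw [Finset.sum_sub_distrib, Finset.sum_const, Finset.card_univ,
          Fintype.card_fin, nsmul_eq_mul]
      have hsumN : ∀ g, ∑ p ∈ F g, N p ω = n g * L g - T g := by
        intro g
        rw [hFsum g N ω]
        simp only [hNdef, hTdef]
        rw [Finset.sum_sub_distrib, Finset.sum_const, Finset.card_univ,
          Fintype.card_fin, nsmul_eq_mul]
      have hT1 : ∀ g, T g - n g * L g < a g := fun g => (hsumZ g) ▸ (hω g).1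
      have hT2 : ∀ g, (n g : ℝ) * L g - T g < a g := fun g => (hsumN g) ▸ (hω g).2
      have hnpos : ∀ g, (0:ℝ) < n g := fun g => by exact_mod_cast hn g
      have habs : ∀ g, |T g / n g - L g| ≤ C₂ * r g / 2 := by
        intro g
        have e : T g / n g - L g = (T g - n g * L g) / n g := by
          field_simp [(hnpos g).ne']
        have ha' : a g = n g * (C₂ * r g / 2) := by simp [hadef]
        rw [e, abs_div, abs_of_pos (hnpos g), div_le_iff₀ (hnpos g)]
        have h1 := hT1 g; have h2 := hT2 g
        rw [ha'] at h1 h2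
        refine abs_le.2 ⟨by linarith, by linarith⟩
      have hφdiff : ∀ x x', φ x - φ x' ≤ B * C₁ * ‖f_enc x - f_enc x'‖ := by
        intro x x'
        have h1 : φ x - φ x' ≤ C₁ * ‖W (f_enc x) - W (f_enc x')‖ :=
          le_trans (le_abs_self _) (hLip (W (f_enc x)) (W (f_enc x')) y)
        have h2 : ‖W (f_enc x) - W (f_enc x')‖ = ‖W (f_enc x - f_enc x')‖ := by
          rw [map_sub]
        have h3 : ‖W (f_enc x - f_enc x')‖ ≤ B * ‖f_enc x - f_enc x'‖ :=
          le_trans (W.le_opNorm _)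
            (mul_le_mul_of_nonneg_right hW (norm_nonneg _))
        calc φ x - φ x' ≤ C₁ * ‖W (f_enc x - f_enc x')‖ := h2 ▸ h1
          _ ≤ C₁ * (B * ‖f_enc x - f_enc x'‖) :=
              mul_le_mul_of_nonneg_left h3 hC₁
          _ = B * C₁ * ‖f_enc x - f_enc x'‖ := by ring
      have hkey : ∀ g g', g ≠ g' → T g / n g ≤ T g' / n g' +
          B * C₁ * ((1 / ((n g : ℝ) * n g')) *
            ∑ k, ∑ l, ‖f_enc (S g k ω) - f_enc (S g' l ω)‖) := by
        intro g g' hgg'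
        set D := ∑ k, ∑ l, ‖f_enc (S g k ω) - f_enc (S g' l ω)‖ with hDdef
        have hD0 : 0 ≤ D := by
          simp only [hDdef]; positivity
        have hdouble : (n g' : ℝ) * T g - n g * T g' ≤ B * C₁ * D := by
          have e : (n g' : ℝ) * T g - n g * T g'
              = ∑ k, ∑ l, (φ (S g k ω) - φ (S g' l ω)) := by
            have e1 : ∀ k : Fin (n g), ∑ l, (φ (S g k ω) - φ (S g' l ω))
                = (n g' : ℝ) * φ (S g k ω) - T g' := by
              intro k
              rw [Finset.sum_sub_distrib, Finset.sum_const, Finset.card_univ,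
                Fintype.card_fin, nsmul_eq_mul, hTdef]
            rw [Finset.sum_congr rfl (fun k _ => e1 k), Finset.sum_sub_distrib,
              Finset.sum_const, Finset.card_univ, Fintype.card_fin, nsmul_eq_mul,
              ← Finset.mul_sum, hTdef]
          rw [e, hDdef, Finset.mul_sum]
          refine Finset.sum_le_sum (fun k _ => ?_)
          rw [Finset.mul_sum]
          exact Finset.sum_le_sum (fun l _ => hφdiff _ _)
        have h2 : (n g' : ℝ) * T g ≤ n g * T g' + B * C₁ * D := by linarith
        calc T g / n g = ((n g' : ℝ) * T g) / ((n g : ℝ) * n g') := by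
              rw [eq_div_iff (mul_pos (hnpos g) (hnpos g')).ne', div_mul_eq_mul_div,
                mul_comm (n g : ℝ) (n g' : ℝ), ← mul_assoc, mul_div_assoc,
                div_self (hnpos g).ne', mul_one]
              exact mul_comm _ _
          _ ≤ ((n g : ℝ) * T g' + B * C₁ * D) / ((n g : ℝ) * n g') := by
              gcongr
          _ = T g' / n g' + B * C₁ * (1 / ((n g : ℝ) * n g') * D) := by
              field_simp [(hnpos g).ne', (hnpos g').ne']
      have hwitD : ((Finset.univ : Finset (Fin m)).offDiag).Nonempty :=
        ⟨(⟨0, by omega⟩, ⟨1, by omega⟩), Finset.mem_offDiag.mpr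
          ⟨Finset.mem_univ _, Finset.mem_univ _, by simp [Fin.ext_iff]⟩⟩
      have hwitU : (Finset.univ : Finset (Fin m)).Nonempty :=
        ⟨⟨0, by omega⟩, Finset.mem_univ _⟩
      set Ahat : ℝ := (Finset.univ : Finset (Fin m)).offDiag.sup' hwitD
        (fun pr => (1 / ((n pr.1 : ℝ) * n pr.2)) *
          ∑ k, ∑ l, ‖f_enc (S pr.1 k ω) - f_enc (S pr.2 l ω)‖) with hAhatdef
      set MaxA : ℝ := Finset.univ.sup' hwitU
        (fun g : Fin m => C₂ * Real.sqrt (8 * Real.log (m / δ) / n g)) with hMaxAdef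
      have hAhat0 : 0 ≤ Ahat := by
        rw [hAhatdef]
        refine le_trans ?_ (Finset.le_sup' _ hwitD.choose_spec)
        positivity
      have hAhatle : ∀ g g', g ≠ g' →
          (1 / ((n g : ℝ) * n g')) *
            (∑ k, ∑ l, ‖f_enc (S g k ω) - f_enc (S g' l ω)‖) ≤ Ahat :=
        by
        intro g g' h
        have hmem : (g, g') ∈ (Finset.univ : Finset (Fin m)).offDiag :=
          Finset.mem_offDiag.mpr ⟨Finset.mem_univ _, Finset.mem_univ _, h⟩
        rw [hAhatdef]
        exact Finset.le_sup' (fun pr : Fin m × Fin m => (1 / ((n pr.1 : ℝ) * n pr.2)) *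
          ∑ k, ∑ l, ‖f_enc (S pr.1 k ω) - f_enc (S pr.2 l ω)‖) hmem
      have hMaxAle : ∀ g, C₂ * r g ≤ MaxA := by
        intro g
        rw [hMaxAdef, hrdef]
        exact Finset.le_sup' (fun g : Fin m => C₂ * Real.sqrt (8 * Real.log (m / δ) / n g))
          (Finset.mem_univ g)
      have hfinal : ∀ g, L g ≤ ε + B * C₁ * Ahat + MaxA := by
        intro g
        have hL1 : L g ≤ T g / n g + C₂ * r g / 2 := by
          have := (abs_le.1 (habs g)).1; linarith
        have hstep : ∀ g', T g / n g ≤ T g' / n g' + B * C₁ * Ahat := by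
          intro g'
          by_cases hgg : g = g'
          · subst hgg
            have : 0 ≤ B * C₁ * Ahat := mul_nonneg (mul_nonneg hB hC₁) hAhat0
            linarith
          · refine (hkey g g' hgg).trans ?_
            have := mul_le_mul_of_nonneg_left (hAhatle g g' hgg)
              (mul_nonneg hB hC₁)
            linarith
        have hsum1 : T g / n g ≤ (∑ g', q g' * (T g' / n g')) + B * C₁ * Ahat := by
          have e : T g / n g = ∑ g' : Fin m, q g' * (T g / n g) := by
            rw [← Finset.sum_mul, hqsum, one_mul]
          rw [e]
          calc ∑ g' : Fin m, q g' * (T g / n g)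
              ≤ ∑ g' : Fin m, q g' * (T g' / n g' + B * C₁ * Ahat) :=
                Finset.sum_le_sum (fun g' _ =>
                  mul_le_mul_of_nonneg_left (hstep g') (hq g').le)
            _ = (∑ g', q g' * (T g' / n g')) + B * C₁ * Ahat := by
                simp_rw [mul_add]
                rw [Finset.sum_add_distrib, ← Finset.sum_mul, hqsum, one_mul]
        have hsum2 : (∑ g' : Fin m, q g' * (T g' / n g')) ≤ ε + MaxA / 2 := by
          calc ∑ g' : Fin m, q g' * (T g' / n g')
              ≤ ∑ g' : Fin m, q g' * (L g' + MaxA / 2) := by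
                refine Finset.sum_le_sum (fun g' _ =>
                  mul_le_mul_of_nonneg_left ?_ (hq g').le)
                have h2 := (abs_le.1 (habs g')).2
                have h3 := hMaxAle g'
                linarith
            _ = (∑ g', q g' * L g') + MaxA / 2 := by
                simp_rw [mul_add]
                rw [Finset.sum_add_distrib, ← Finset.sum_mul, hqsum, one_mul]
            _ ≤ ε + MaxA / 2 := by linarith [havgL]
        have hC2r : C₂ * r g ≤ MaxA := hMaxAle g
        linarith
      refine Finset.sup'_le _ _ (fun g _ => ?_)
      exact hfinal g
    calc ENNReal.ofReal (1 - δ) ≤ 1 - ENNReal.ofReal δ := by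
          refine ENNReal.le_sub_of_add_le_right ENNReal.ofReal_ne_top ?_
          rw [← ENNReal.ofReal_add (by linarith) hδ0.le]
          simp
      _ ≤ 1 - ℙ Bad := tsub_le_tsub_left hBadle 1
      _ = ℙ Badᶜ := (prob_compl_eq_one_sub hBadmeas).symm
      _ ≤ _ := measure_mono hgood
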